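/- For a prime p with p ≡ 2 (mod 3), the function f_p : ℕ → ℂ defined by f_p(n) = 0 if p ∣ n and f_p(n) = 1 otherwise is multiplicative and satisfies f_p(x² − xy + y²) = f_p(x)² − f_p(x)f_p(y) + f_p(y)² for all positive integers x, y. -/
import Mathlib

lemma key_zmod (p : ℕ) (hp : p.Prime) (hmod : p % 3 = 2)
    (x y : ZMod p) (h : x ^ 2 - x * y + y ^ 2 = 0) : x = 0 ∧ y = 0 := by
  haveI : Fact p.Prime := ⟨hp⟩
  have hx0 : x = 0 → y = 0 := by
    intro hx; subst hx
    simpa [pow_eq_zero_iff] using h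
  have hy0 : y = 0 → x = 0 := by
    intro hy; subst hy
    simpa [pow_eq_zero_iff] using h
  suffices hsuf : x = 0 by exact ⟨hsuf, hx0 hsuf⟩
  by_contra hx
  have hy : y ≠ 0 := fun hy => hx (hy0 hy)
  -- cubing is injective on units since gcd(3, p-1) = 1
  have hcard : Nat.card (ZMod p)ˣ = p - 1 := by
    rw [Nat.card_eq_fintype_card, ZMod.card_units_eq_totient, Nat.totient_prime hp]
  have hcop : (Nat.card (ZMod p)ˣ).Coprime 3 := by
    rw [hcard, Nat.coprime_comm]
    rw [Nat.Prime.coprime_iff_not_dvd (by norm_num)]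
    intro ⟨k, hk⟩
    have := hp.two_le
    omega
  have hcube : x ^ 3 = (-y) ^ 3 := by
    have : x ^ 3 + y ^ 3 = (x + y) * (x ^ 2 - x * y + y ^ 2) := by ring
    rw [h, mul_zero] at this
    have : x ^ 3 = -(y ^ 3) := by linear_combination this
    rw [this]; ring
  have hinj := hcop.pow_left_bijective.injective
  have hux : (Units.mk0 x hx) ^ 3 = (Units.mk0 (-y) (neg_ne_zero.mpr hy)) ^ 3 := by
    ext
    simpa using hcube
  have := hinj hux
  have hxy : x = -y := by
    have := congrArg Units.val this
    simpa using this
  rw [hxy] at h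
  have h3 : (3 : ZMod p) * y ^ 2 = 0 := by linear_combination h
  rcases mul_eq_zero.mp h3 with h3' | h3'
  · have : (p : ℕ) ∣ 3 := by
      have := (ZMod.natCast_eq_zero_iff 3 p).mp (by exact_mod_cast h3')
      exact this
    have := (Nat.prime_dvd_prime_iff_eq hp (by norm_num)).mp this
    omega
  · exact hy (pow_eq_zero_iff (by norm_num) |>.mp h3')

lemma key_dvd (p : ℕ) (hp : p.Prime) (hmod : p % 3 = 2) (x y : ℕ) :
    p ∣ (x ^ 2 + y ^ 2 - x * y) ↔ (p ∣ x ∧ p ∣ y) := by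
  have hle : x * y ≤ x ^ 2 + y ^ 2 := by
    rcases le_total x y with h | h <;> nlinarith
  constructor
  · intro h
    have hz : ((x : ZMod p) ^ 2 - x * y + y ^ 2 : ZMod p) = 0 := by
      have := (ZMod.natCast_eq_zero_iff _ p).mpr h
      have hcast : ((x ^ 2 + y ^ 2 - x * y : ℕ) : ZMod p)
          = (x : ZMod p) ^ 2 + (y : ZMod p) ^ 2 - (x : ZMod p) * (y : ZMod p) := by
        rw [Nat.cast_sub hle]; push_cast; ring
      rw [hcast] at this
      linear_combination this
    have := key_zmod p hp hmod x y hz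
    exact ⟨(ZMod.natCast_eq_zero_iff x p).mp this.1,
      (ZMod.natCast_eq_zero_iff y p).mp this.2⟩
  · rintro ⟨hx, hy⟩
    exact Nat.dvd_sub (Nat.dvd_add (Dvd.dvd.pow hx (by norm_num)) (Dvd.dvd.pow hy (by norm_num)))
      (hx.mul_right y)

theorem stmt_13 (p : ℕ) (hp : p.Prime) (hmod : p % 3 = 2)
    (f : ℕ → ℂ) (hf : ∀ n, f n = if p ∣ n then 0 else 1) :
    (f 1 = 1 ∧ ∀ m n : ℕ, Nat.gcd m n = 1 → f (m * n) = f m * f n) ∧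
    ∀ x y : ℕ, 0 < x → 0 < y →
      f (x ^ 2 + y ^ 2 - x * y) = f x ^ 2 - f x * f y + f y ^ 2 := by
  constructor
  · constructor
    · rw [hf]; simp [Nat.dvd_one, hp.ne_one]
    · intro m n _
      rw [hf, hf, hf]
      by_cases hm : p ∣ m <;> by_cases hn : p ∣ n <;> simp [hm, hn, hp.dvd_mul]
  · intro x y _ _
    rw [hf, hf, hf]
    by_cases hx : p ∣ x <;> by_cases hy : p ∣ y <;>
      simp [hx, hy, key_dvd p hp hmod]
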